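/- Dini condition for the angular average (Proposition 7.4): Let n ≥ 3 and let f : ℝ^{n−1} → ℝ be convex on the closed unit ball B̄₁ ⊆ ℝ^{n−1}, with f(0) = 0, f ≥ 0 on B̄₁, and |f(x) − f(y)| ≤ L·‖x − y‖ for all x, y ∈ B̄₁ (L > 0). For θ ∈ 𝕊^{n−2} and t ∈ (0,1), let f′⁺(t,θ) denote the right derivative at s = t of the convex function s ↦ f(sθ) (which exists), and set N(t,θ) := t·f′⁺(t,θ) − f(tθ) (which is nonnegative). Then ∫₀^{1/2} t⁻² (∫_{𝕊^{n−2}} N(t,θ) dσ(θ)) dt ≤ 16·L·σ(𝕊^{n−2}), where σ is the surface measure on the unit sphere 𝕊^{n−2} ⊆ ℝ^{n−1}. -/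

import Mathlib

open Set MeasureTheory

noncomputable section

/-- Telescoping/slope bound for a convex function of one variable:
if `g` is convex on `[0,1]` with `g 0 = 0`, `g ≥ 0`, then for `0 < t ≤ s` with `2s ≤ 1`
we have `t g'⁺(t) − g(t) ≤ g(2s) − 2 g(s)`. -/
lemma oneDim (g : ℝ → ℝ) (hg : ConvexOn ℝ (Icc 0 1) g) (hg0 : g 0 = 0)
    (hgnn : ∀ u ∈ Icc (0:ℝ) 1, 0 ≤ g u)
    {t s : ℝ} (ht : 0 < t) (hts : t ≤ s) (hs1 : 2 * s ≤ 1) :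
    t * derivWithin g (Ici t) t - g t ≤ g (2 * s) - 2 * g s := by
  have hs0 : 0 < s := ht.trans_le hts
  set c : ℝ := 2 * s with hc
  have hsc : s < c := by rw [hc]; linarith
  have htc : t < c := lt_of_le_of_lt hts hsc
  have hc1 : c ≤ 1 := hs1
  have htm : t ∈ Icc (0:ℝ) 1 := ⟨ht.le, by linarith⟩
  have hsm : s ∈ Icc (0:ℝ) 1 := ⟨hs0.le, by linarith⟩
  have hcm : c ∈ Icc (0:ℝ) 1 := ⟨by positivity, hc1⟩
  have h0m : (0:ℝ) ∈ Icc (0:ℝ) 1 := ⟨le_refl _, by norm_num⟩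
  -- midpoint convexity : 2 * g s ≤ g c
  have hmid : 2 * g s ≤ g c := by
    have h2 := hg.2 h0m hcm (by norm_num : (0:ℝ) ≤ 1/2) (by norm_num : (0:ℝ) ≤ 1/2)
      (by norm_num)
    simp only [smul_zero, zero_add, smul_eq_mul, hg0] at h2
    have he : (1/2 : ℝ) * c = s := by rw [hc]; ring
    norm_num at h2
    rw [he] at h2
    linarith
  set M : ℝ := (g c - g s) / (c - s) with hM
  have hcs : c - s = s := by rw [hc]; ring
  have hend : s * M - g s = g c - 2 * g s := by
    rw [hM, hcs]
    field_simp
    ring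
  by_cases hd : DifferentiableWithinAt ℝ g (Ici t) t
  · have hD := hd.hasDerivWithinAt
    rw [hasDerivWithinAt_iff_tendsto_slope] at hD
    have hstep : derivWithin g (Ici t) t ≤ (g c - g t) / (c - t) := by
      rw [Ici_sdiff_left] at hD
      refine le_of_tendsto hD ?_
      filter_upwards [(eventually_lt_nhds htc).filter_mono nhdsWithin_le_nhds,
        self_mem_nhdsWithin] with u huc hut
      rw [slope_def_field]
      exact hg.secant_mono htm ⟨(ht.trans hut).le, le_of_lt (lt_of_lt_of_le huc hc1)⟩ hcm
        (ne_of_gt hut) (ne_of_gt htc) huc.le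
    have hA : (g c - g t) / (c - t) ≤ M := by
      rcases eq_or_lt_of_le hts with rfl | hlt
      · exact le_of_eq rfl
      · have raw := hg.secant_mono hcm htm hsm (ne_of_lt htc) (ne_of_lt hsc) hts
        have e1 : (g t - g c) / (t - c) = (g c - g t) / (c - t) := by
          rw [← neg_div_neg_eq]; congr 1 <;> ring
        have e2 : (g s - g c) / (s - c) = M := by
          rw [hM, ← neg_div_neg_eq]; congr 1 <;> ring
        rw [e1, e2] at raw
        exact raw
    have hB : g s - g t ≤ (s - t) * M := by
      rcases eq_or_lt_of_le hts with rfl | hlt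
      · simp
      · have raw := hg.secant_mono hsm htm hcm (ne_of_lt hlt) (ne_of_gt hsc) (le_of_lt htc)
        have e1 : (g t - g s) / (t - s) = (g s - g t) / (s - t) := by
          rw [← neg_div_neg_eq]; congr 1 <;> ring
        rw [e1, ← hM] at raw
        have := (div_le_iff₀ (by linarith : (0:ℝ) < s - t)).mp raw
        linarith [this]
    have h1 : t * derivWithin g (Ici t) t ≤ t * ((g c - g t) / (c - t)) :=
      mul_le_mul_of_nonneg_left hstep ht.le
    have h2 : t * ((g c - g t) / (c - t)) ≤ t * M := mul_le_mul_of_nonneg_left hA ht.le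
    have hexp : (s - t) * M = s * M - t * M := by ring
    linarith [hB, hexp ▸ hB, hend]
  · rw [derivWithin_zero_of_not_differentiableWithinAt hd]
    have := hgnn t htm
    linarith

/-- `N(t,θ) = t·f′⁺(t,θ) − f(tθ)`, where `f′⁺(t,θ)` is the right derivative at `s = t`
of the convex function `s ↦ f(sθ)`, rendered as the derivative within `Ici t`. -/
noncomputable def Nrad {m : ℕ} (f : EuclideanSpace ℝ (Fin m) → ℝ) (t : ℝ)
    (θ : EuclideanSpace ℝ (Fin m)) : ℝ :=
  t * derivWithin (fun s : ℝ => f (s • θ)) (Ici t) t - f (t • θ)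

/-- Dini condition for the angular average (Proposition 7.4), stated with `m = n − 1 ≥ 2`.
Here `volume.toSphere` is the surface measure `σ` on the unit sphere `𝕊^{m−1} ⊆ ℝ^m`. -/
theorem dini_angular_average {m : ℕ} (hm : 2 ≤ m) (L : ℝ) (hL : 0 < L)
    (f : EuclideanSpace ℝ (Fin m) → ℝ)
    (hconv : ConvexOn ℝ (Metric.closedBall (0 : EuclideanSpace ℝ (Fin m)) 1) f)
    (hf0 : f 0 = 0)
    (hfnn : ∀ x ∈ Metric.closedBall (0 : EuclideanSpace ℝ (Fin m)) 1, 0 ≤ f x)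
    (hlip : ∀ x ∈ Metric.closedBall (0 : EuclideanSpace ℝ (Fin m)) 1,
      ∀ y ∈ Metric.closedBall (0 : EuclideanSpace ℝ (Fin m)) 1,
        |f x - f y| ≤ L * ‖x - y‖) :
    ∫⁻ t in Ioo (0:ℝ) (1/2),
        (ENNReal.ofReal (t ^ 2))⁻¹ *
          ∫⁻ θ : Metric.sphere (0 : EuclideanSpace ℝ (Fin m)) 1,
            ENNReal.ofReal (Nrad f t (θ : EuclideanSpace ℝ (Fin m)))
              ∂((volume : Measure (EuclideanSpace ℝ (Fin m))).toSphere)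
      ≤ ENNReal.ofReal (16 * L) *
          (volume : Measure (EuclideanSpace ℝ (Fin m))).toSphere Set.univ := by
  classical
  set σ := (volume : Measure (EuclideanSpace ℝ (Fin m))).toSphere with hσdef
  -- basic membership facts
  have hball : ∀ (c : ℝ), |c| ≤ 1 → ∀ θ : EuclideanSpace ℝ (Fin m), ‖θ‖ = 1 →
      c • θ ∈ Metric.closedBall (0 : EuclideanSpace ℝ (Fin m)) 1 := by
    intro c hc θ hθ
    rw [Metric.mem_closedBall, dist_zero_right, norm_smul, hθ, mul_one, Real.norm_eq_abs]
    exact hc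
  have habsIcc : ∀ x ∈ Icc (0:ℝ) 1, |x| ≤ 1 := fun x hx =>
    abs_le.mpr ⟨by linarith [hx.1], hx.2⟩
  have hθnorm : ∀ θ : Metric.sphere (0 : EuclideanSpace ℝ (Fin m)) 1,
      ‖(θ : EuclideanSpace ℝ (Fin m))‖ = 1 := fun θ => mem_sphere_zero_iff_norm.mp θ.2
  -- convexity of the radial sections
  have hgconv : ∀ θ : EuclideanSpace ℝ (Fin m), ‖θ‖ = 1 →
      ConvexOn ℝ (Icc (0:ℝ) 1) (fun u : ℝ => f (u • θ)) := by
    intro θ hθ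
    refine ⟨convex_Icc _ _, ?_⟩
    intro a ha b hb wa wb hwa hwb hab
    simp only [smul_eq_mul]
    have h1 : (wa * a + wb * b) • θ = wa • (a • θ) + wb • (b • θ) := by
      rw [add_smul, smul_smul, smul_smul]
    rw [h1]
    exact hconv.2 (hball a (habsIcc a ha) θ hθ) (hball b (habsIcc b hb) θ hθ) hwa hwb hab
  -- the key pointwise bound
  have key : ∀ θ : EuclideanSpace ℝ (Fin m), ‖θ‖ = 1 → ∀ t s : ℝ, 0 < t → t ≤ s → 2 * s ≤ 1 →
      Nrad f t θ ≤ f ((2 * s) • θ) - 2 * f (s • θ) := by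
    intro θ hθ t s ht hts hs1
    have h := oneDim (fun u => f (u • θ)) (hgconv θ hθ) (by simp [hf0])
      (fun u hu => hfnn _ (hball u (habsIcc u hu) θ hθ)) ht hts hs1
    simpa [Nrad] using h
  -- continuity and measurability
  have hlipOn : LipschitzOnWith (Real.toNNReal L)
      f (Metric.closedBall (0 : EuclideanSpace ℝ (Fin m)) 1) := by
    apply LipschitzOnWith.of_dist_le_mul
    intro x hx y hy
    rw [Real.dist_eq, dist_eq_norm, Real.coe_toNNReal _ hL.le]
    exact hlip x hx y hy
  have hcont := hlipOn.continuousOn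
  have hmeasf : ∀ c : ℝ, |c| ≤ 1 →
      Measurable (fun θ : Metric.sphere (0 : EuclideanSpace ℝ (Fin m)) 1 =>
        f (c • (θ : EuclideanSpace ℝ (Fin m)))) := by
    intro c hc
    have h1 : Continuous (fun θ : Metric.sphere (0 : EuclideanSpace ℝ (Fin m)) 1 =>
        c • (θ : EuclideanSpace ℝ (Fin m))) := continuous_subtype_val.const_smul c
    exact (hcont.comp_continuous h1 (fun θ => hball c hc _ (hθnorm θ))).measurable
  -- dyadic radii
  set r : ℕ → ℝ := fun k => (2:ℝ)⁻¹ ^ k with hr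
  have hrpos : ∀ k, 0 < r k := fun k => pow_pos (by norm_num) k
  have hr0 : r 0 = 1 := pow_zero _
  have hrsucc : ∀ k, 2 * r (k+1) = r k := by
    intro k; rw [hr]; simp only [pow_succ]; ring
  have hr1 : ∀ k, r k ≤ 1 := fun k => pow_le_one₀ (by norm_num) (by norm_num)
  have habsr : ∀ k, |r k| ≤ 1 := fun k => abs_le.mpr ⟨by linarith [hrpos k], hr1 k⟩
  have hrq : ∀ k, r (k+2) = r k / 4 := by
    intro k
    rw [← hrsucc k, ← hrsucc (k+1)]; ring
  -- the dyadic cover of (0, 1/2)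
  have hcover : Ioo (0:ℝ) (1/2) ⊆ ⋃ k : ℕ, Ioc (r (k+2)) (r (k+1)) := by
    rintro t ⟨ht0, ht2⟩
    have hex : ∃ n, r n < t := by
      obtain ⟨n, hn⟩ := exists_pow_lt_of_lt_one ht0 (by norm_num : (2:ℝ)⁻¹ < 1)
      exact ⟨n, hn⟩
    have hn : r (Nat.find hex) < t := Nat.find_spec hex
    have hn2 : 2 ≤ Nat.find hex := by
      by_contra h
      push_neg at h
      have h01 : Nat.find hex = 0 ∨ Nat.find hex = 1 := by omega
      rcases h01 with h0 | h1
      · rw [h0, hr0] at hn; linarith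
      · rw [h1] at hn
        have : r 1 = 1/2 := by rw [hr]; norm_num
        rw [this] at hn; linarith
    have hmin : ¬ r (Nat.find hex - 1) < t := Nat.find_min hex (by omega)
    refine mem_iUnion.mpr ⟨Nat.find hex - 2, ?_⟩
    rw [(by omega : Nat.find hex - 2 + 2 = Nat.find hex),
      (by omega : Nat.find hex - 2 + 1 = Nat.find hex - 1)]
    exact ⟨hn, not_lt.mp hmin⟩
  -- abbreviations
  set D : ℕ → Metric.sphere (0 : EuclideanSpace ℝ (Fin m)) 1 → ℝ :=
    fun k θ => f (r k • (θ : EuclideanSpace ℝ (Fin m)))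
      - 2 * f (r (k+1) • (θ : EuclideanSpace ℝ (Fin m))) with hD
  set C : ℕ → ENNReal := fun k => ∫⁻ θ, ENNReal.ofReal (D k θ) ∂σ with hC
  have hmeasD : ∀ k, Measurable (fun θ : Metric.sphere (0 : EuclideanSpace ℝ (Fin m)) 1 =>
      ENNReal.ofReal ((r (k+2))⁻¹ * D k θ)) := by
    intro k
    exact (Measurable.const_mul
      ((hmeasf (r k) (habsr k)).sub ((hmeasf (r (k+1)) (habsr _)).const_mul 2)) _).ennreal_ofReal
  -- per-interval bound
  have hIoc : ∀ k, (∫⁻ t in Ioc (r (k+2)) (r (k+1)),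
      (ENNReal.ofReal (t ^ 2))⁻¹ *
        ∫⁻ θ : Metric.sphere (0 : EuclideanSpace ℝ (Fin m)) 1,
          ENNReal.ofReal (Nrad f t (θ : EuclideanSpace ℝ (Fin m))) ∂σ)
      ≤ ENNReal.ofReal ((r (k+2))⁻¹) * C k := by
    intro k
    have hb : ∀ t ∈ Ioc (r (k+2)) (r (k+1)),
        (ENNReal.ofReal (t ^ 2))⁻¹ *
          (∫⁻ θ : Metric.sphere (0 : EuclideanSpace ℝ (Fin m)) 1,
            ENNReal.ofReal (Nrad f t (θ : EuclideanSpace ℝ (Fin m))) ∂σ)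
          ≤ (ENNReal.ofReal ((r (k+2)) ^ 2))⁻¹ * C k := by
      rintro t ⟨ht1, ht2⟩
      have htpos : 0 < t := (hrpos _).trans ht1
      apply mul_le_mul'
      · apply ENNReal.inv_le_inv'
        apply ENNReal.ofReal_le_ofReal
        nlinarith [hrpos (k+2)]
      · apply lintegral_mono
        intro θ
        apply ENNReal.ofReal_le_ofReal
        have h := key _ (hθnorm θ) t (r (k+1)) htpos ht2
          (by rw [hrsucc k]; exact hr1 k)
        rw [hrsucc k] at h
        exact h
    calc (∫⁻ t in Ioc (r (k+2)) (r (k+1)),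
        (ENNReal.ofReal (t ^ 2))⁻¹ *
          ∫⁻ θ : Metric.sphere (0 : EuclideanSpace ℝ (Fin m)) 1,
            ENNReal.ofReal (Nrad f t (θ : EuclideanSpace ℝ (Fin m))) ∂σ)
        ≤ ∫⁻ _ in Ioc (r (k+2)) (r (k+1)), (ENNReal.ofReal ((r (k+2)) ^ 2))⁻¹ * C k :=
          setLIntegral_mono measurable_const hb
      _ = ((ENNReal.ofReal ((r (k+2)) ^ 2))⁻¹ * C k) * volume (Ioc (r (k+2)) (r (k+1))) :=
          setLIntegral_const _ _
      _ = ENNReal.ofReal ((r (k+2))⁻¹) * C k := by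
          rw [Real.volume_Ioc]
          have he : r (k+1) - r (k+2) = r (k+2) := by
            have h1 := hrsucc (k+1)
            linarith
          rw [he, ← ENNReal.ofReal_inv_of_pos (by positivity : (0:ℝ) < (r (k+2)) ^ 2)]
          rw [mul_right_comm, ← ENNReal.ofReal_mul (by positivity)]
          congr 2
          have hne : r (k+2) ≠ 0 := (hrpos _).ne'
          field_simp [sq]
  -- rewrite the per-interval bound as an integral over the sphere
  have hCk_eq : ∀ k, ENNReal.ofReal ((r (k+2))⁻¹) * C k
      = ∫⁻ θ, ENNReal.ofReal ((r (k+2))⁻¹ * D k θ) ∂σ := by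
    intro k
    rw [hC, ← lintegral_const_mul' _ _ ENNReal.ofReal_ne_top]
    congr 1
    funext θ
    rw [← ENNReal.ofReal_mul (by positivity)]
  -- pointwise telescoping bound on the sphere
  have hpt : ∀ θ : Metric.sphere (0 : EuclideanSpace ℝ (Fin m)) 1,
      (∑' k, ENNReal.ofReal ((r (k+2))⁻¹ * D k θ)) ≤ ENNReal.ofReal (16 * L) := by
    intro θ
    set b : ℕ → ℝ := fun k => (r k)⁻¹ * f (r k • (θ : EuclideanSpace ℝ (Fin m))) with hb
    have hterm : ∀ k, (r (k+2))⁻¹ * D k θ = 4 * b k - 4 * b (k+1) := by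
      intro k
      have e0 : r (k+2) = r k / 4 := hrq k
      have e0' : r (k+1) = r k / 2 := by have := hrsucc k; linarith
      have hne : r k ≠ 0 := (hrpos k).ne'
      rw [hD, hb]
      simp only [e0, e0']
      field_simp
    have hmono : ∀ k, b (k+1) ≤ b k := by
      intro k
      have e0' : r (k+1) = r k / 2 := by have := hrsucc k; linarith
      have hne : r k ≠ 0 := (hrpos k).ne'
      have hhalf : f (r (k+1) • (θ : EuclideanSpace ℝ (Fin m)))
          ≤ (1/2) * f (r k • (θ : EuclideanSpace ℝ (Fin m))) := by
        have h2 := hconv.2 (hball (r k) (habsr k) _ (hθnorm θ))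
          (by simp : (0 : EuclideanSpace ℝ (Fin m)) ∈ Metric.closedBall (0 : EuclideanSpace ℝ (Fin m)) 1)
          (by norm_num : (0:ℝ) ≤ 1/2) (by norm_num : (0:ℝ) ≤ 1/2) (by norm_num)
        rw [smul_zero, add_zero, hf0, smul_smul] at h2
        have he : (1/2 : ℝ) * r k = r (k+1) := by rw [e0']; ring
        rw [he] at h2
        simpa using h2
      have h3 : (r (k+1))⁻¹ * f (r (k+1) • (θ : EuclideanSpace ℝ (Fin m)))
          ≤ (r (k+1))⁻¹ * ((1/2) * f (r k • (θ : EuclideanSpace ℝ (Fin m)))) :=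
        mul_le_mul_of_nonneg_left hhalf (inv_nonneg.mpr (hrpos _).le)
      have h4 : (r (k+1))⁻¹ * (1/2 : ℝ) = (r k)⁻¹ := by
        rw [e0']; field_simp
      calc b (k+1) ≤ (r (k+1))⁻¹ * ((1/2) * f (r k • (θ : EuclideanSpace ℝ (Fin m)))) := h3
        _ = ((r (k+1))⁻¹ * (1/2)) * f (r k • (θ : EuclideanSpace ℝ (Fin m))) := by ring
        _ = b k := by rw [h4]
    have hbnn : ∀ k, 0 ≤ b k := fun k =>
      mul_nonneg (inv_nonneg.mpr (hrpos k).le) (hfnn _ (hball (r k) (habsr k) _ (hθnorm θ)))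
    have hb0 : b 0 = f (θ : EuclideanSpace ℝ (Fin m)) := by
      rw [hb]; simp [hr0]
    have hθball : (θ : EuclideanSpace ℝ (Fin m)) ∈
        Metric.closedBall (0 : EuclideanSpace ℝ (Fin m)) 1 := by
      rw [Metric.mem_closedBall, dist_zero_right, hθnorm θ]
    have hfθ : f (θ : EuclideanSpace ℝ (Fin m)) ≤ L := by
      have h := hlip _ hθball 0 (by simp)
      rw [hf0, sub_zero, sub_zero, hθnorm θ, mul_one] at h
      calc f (θ : EuclideanSpace ℝ (Fin m)) ≤ |f (θ : EuclideanSpace ℝ (Fin m))| := le_abs_self _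
        _ ≤ L := h
    apply ENNReal.tsum_le_of_sum_range_le
    intro n
    have hsum_eq : ∑ k ∈ Finset.range n, ENNReal.ofReal ((r (k+2))⁻¹ * D k θ)
        = ENNReal.ofReal (∑ k ∈ Finset.range n, (4 * b k - 4 * b (k+1))) := by
      rw [ENNReal.ofReal_sum_of_nonneg (fun k _ => by linarith [hmono k])]
      exact Finset.sum_congr rfl fun k _ => by rw [hterm k]
    rw [hsum_eq, Finset.sum_range_sub' (fun k => 4 * b k) n]
    apply ENNReal.ofReal_le_ofReal
    have := hbnn n
    rw [hb0]
    nlinarith [hfθ, hL]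
  -- put everything together
  calc (∫⁻ t in Ioo (0:ℝ) (1/2),
      (ENNReal.ofReal (t ^ 2))⁻¹ *
        ∫⁻ θ : Metric.sphere (0 : EuclideanSpace ℝ (Fin m)) 1,
          ENNReal.ofReal (Nrad f t (θ : EuclideanSpace ℝ (Fin m))) ∂σ)
      ≤ ∫⁻ t in ⋃ k : ℕ, Ioc (r (k+2)) (r (k+1)),
        (ENNReal.ofReal (t ^ 2))⁻¹ *
          ∫⁻ θ : Metric.sphere (0 : EuclideanSpace ℝ (Fin m)) 1,
            ENNReal.ofReal (Nrad f t (θ : EuclideanSpace ℝ (Fin m))) ∂σ :=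
      lintegral_mono_set hcover
    _ ≤ ∑' k, ∫⁻ t in Ioc (r (k+2)) (r (k+1)),
        (ENNReal.ofReal (t ^ 2))⁻¹ *
          ∫⁻ θ : Metric.sphere (0 : EuclideanSpace ℝ (Fin m)) 1,
            ENNReal.ofReal (Nrad f t (θ : EuclideanSpace ℝ (Fin m))) ∂σ :=
      lintegral_iUnion_le _ _
    _ ≤ ∑' k, ENNReal.ofReal ((r (k+2))⁻¹) * C k := ENNReal.tsum_le_tsum hIoc
    _ = ∑' k, ∫⁻ θ, ENNReal.ofReal ((r (k+2))⁻¹ * D k θ) ∂σ := tsum_congr hCk_eq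
    _ = ∫⁻ θ, ∑' k, ENNReal.ofReal ((r (k+2))⁻¹ * D k θ) ∂σ :=
      (lintegral_tsum fun k => (hmeasD k).aemeasurable).symm
    _ ≤ ∫⁻ _, ENNReal.ofReal (16 * L) ∂σ := lintegral_mono hpt
    _ = ENNReal.ofReal (16 * L) * σ Set.univ := lintegral_const _
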